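/- Let (Ω, F, P) be a probability space, k ≥ 1 an integer, and W_1, …, W_k independent, identically distributed real-valued random variables. Let g > 0, let f : [g,∞) → ℝ be nondecreasing, and set β := 2·exp(−f(g)). Assume |W_1| ≥ g almost surely and P(|W_1| ≥ u) ≤ (2/β)·exp(−f(u)) for every u ≥ g. Then for every real r > k·g and every δ ∈ (0,1) with (1−δ)·r > k·g, one has P(∑_{i=1}^k |W_i| > r) ≤ (2/β)^k · (2 + (ln r − ln g)/ln(1+δ))^k · exp(−inf{∑_{i=1}^k f(x_i) : ∑_{i=1}^k x_i = (1−δ)·r, x_i ∈ [g, r] for all i}). -/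

import Mathlib

open MeasureTheory ProbabilityTheory

lemma exists_scaled_down {k : ℕ} (g T : ℝ) (a : Fin k → ℝ) (hga : ∀ i, g ≤ a i)
    (hT : (k : ℝ) * g ≤ T) (hsum : T ≤ ∑ i, a i) :
    ∃ x : Fin k → ℝ, (∀ i, g ≤ x i ∧ x i ≤ a i) ∧ ∑ i, x i = T := by
  have hsa : (k : ℝ) * g ≤ ∑ i, a i := le_trans hT hsum
  rcases eq_or_lt_of_le hsa with h | h
  · exact ⟨a, fun i => ⟨hga i, le_refl _⟩, le_antisymm (by linarith) hsum⟩
  · set c := (T - k * g) / ((∑ i, a i) - k * g) with hc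
    have hden : 0 < (∑ i, a i) - k * g := by linarith
    have hc0 : 0 ≤ c := div_nonneg (by linarith) hden.le
    have hc1 : c ≤ 1 := (div_le_one hden).2 (by linarith)
    refine ⟨fun i => g + c * (a i - g), fun i => ⟨?_, ?_⟩, ?_⟩
    · show g ≤ g + c * (a i - g)
      nlinarith [hga i]
    · show g + c * (a i - g) ≤ a i
      nlinarith [hga i]
    · have h1 : ∑ i : Fin k, (g + c * (a i - g)) = (k:ℝ)*g + c * ((∑ i, a i) - (k:ℝ)*g) := by
        rw [Finset.sum_add_distrib, Finset.sum_const, Finset.card_univ, Fintype.card_fin,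
          ← Finset.mul_sum, Finset.sum_sub_distrib, Finset.sum_const, Finset.card_univ,
          Fintype.card_fin, nsmul_eq_mul]
      show ∑ i : Fin k, (g + c * (a i - g)) = T
      rw [h1, hc, div_mul_cancel₀ _ hden.ne']
      ring

/-- **Lemma 3.4.** Tail estimate for the sum of absolute values of `k` i.i.d. random variables
whose modulus is at least `g` a.s. and whose tail satisfies
`P(|W₁| ≥ u) ≤ (2/β) exp(-f u)` for `u ≥ g`, where `β = 2 exp(-f g)` and `f` is nondecreasing
on `[g, ∞)`. -/
theorem sum_big_jump_tail_estimate
    {Ω : Type*} [MeasureSpace Ω] [IsProbabilityMeasure (ℙ : Measure Ω)]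
    (k : ℕ) (hk : 0 < k) (W : Fin k → Ω → ℝ) (hWmeas : ∀ i, Measurable (W i))
    (hindep : iIndepFun W ℙ)
    (hident : ∀ i, IdentDistrib (W i) (W ⟨0, hk⟩) ℙ ℙ)
    (g : ℝ) (hg : 0 < g) (f : ℝ → ℝ) (hf : MonotoneOn f (Set.Ici g))
    (β : ℝ) (hβ : β = 2 * Real.exp (-f g))
    (habs : ∀ᵐ ω ∂(ℙ : Measure Ω), g ≤ |W ⟨0, hk⟩ ω|)
    (htail : ∀ u ≥ g, (ℙ {ω | u ≤ |W ⟨0, hk⟩ ω|}) ≤ ENNReal.ofReal (2 / β * Real.exp (-f u)))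
    (r δ : ℝ) (hr : (k : ℝ) * g < r) (hδ : δ ∈ Set.Ioo (0 : ℝ) 1)
    (hδr : (k : ℝ) * g < (1 - δ) * r) :
    ℙ {ω | r < ∑ i, |W i ω|} ≤
      ENNReal.ofReal ((2 / β) ^ k *
        (2 + (Real.log r - Real.log g) / Real.log (1 + δ)) ^ k *
        Real.exp (-sInf {s : ℝ | ∃ x : Fin k → ℝ, (∀ i, x i ∈ Set.Icc g r) ∧
          (∑ i, x i) = (1 - δ) * r ∧ s = ∑ i, f (x i)})) := by
  obtain ⟨hδ0, hδ1⟩ := hδ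
  have hk1 : (1 : ℝ) ≤ k := by exact_mod_cast hk
  have hgr : g < r := lt_of_le_of_lt (le_mul_of_one_le_left hg.le hk1) hr
  have hr0 : 0 < r := hg.trans hgr
  have h1δ : (1 : ℝ) < 1 + δ := by linarith
  have hlog1δ : 0 < Real.log (1 + δ) := Real.log_pos h1δ
  set L : ℝ := (Real.log r - Real.log g) / Real.log (1 + δ) with hLdef
  have hloggr : Real.log g < Real.log r := Real.log_lt_log hg hgr
  have hL0 : 0 ≤ L := div_nonneg (by linarith) hlog1δ.le
  set N := ⌊L⌋₊ with hNdef
  have hNL : (N : ℝ) ≤ L := Nat.floor_le hL0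
  -- the grid
  set b : Fin (N + 2) → ℝ := fun j => min (g * (1 + δ) ^ (j : ℕ)) r with hbdef
  have hbg : ∀ j, g ≤ b j := by
    intro j
    refine le_min ?_ hgr.le
    nlinarith [one_le_pow₀ (a := (1:ℝ)+δ) (n := (j:ℕ)) h1δ.le]
  have hbr : ∀ j, b j ≤ r := fun j => min_le_right _ _
  -- the grid point value when the power is below r
  have hlogpow : ∀ n : ℕ, Real.log (g * (1 + δ) ^ n) = Real.log g + n * Real.log (1 + δ) := by
    intro n
    rw [Real.log_mul hg.ne' (pow_ne_zero _ (by linarith)), Real.log_pow]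
  have hblast : ∀ h, b ⟨N + 1, h⟩ = r := by
    intro h
    have hx : r < g * (1 + δ) ^ (N + 1) := by
      have h1 : L < (N : ℝ) + 1 := Nat.lt_floor_add_one L
      have h2 : Real.log r < Real.log (g * (1 + δ) ^ (N + 1)) := by
        rw [hlogpow]
        have : L * Real.log (1 + δ) = Real.log r - Real.log g :=
          div_mul_cancel₀ _ hlog1δ.ne'
        push_cast
        nlinarith
      have hgp : 0 < g * (1 + δ) ^ (N + 1) := by positivity
      exact (Real.log_lt_log_iff hr0 hgp).1 h2
    exact min_eq_right hx.le
  -- the tail events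
  set A : ℝ → Fin k → Set Ω := fun c i => {ω | c ≤ |W i ω|} with hAdef
  have hAeq : ∀ c i, A c i = W i ⁻¹' {x : ℝ | c ≤ |x|} := fun c i => rfl
  have hmeasR : ∀ c : ℝ, MeasurableSet {x : ℝ | c ≤ |x|} :=
    fun c => (isClosed_le continuous_const continuous_abs).measurableSet
  have hAmeas : ∀ c i, MeasurableSet (A c i) := fun c i => (hWmeas i) (hmeasR c)
  have hAprob : ∀ c ≥ g, ∀ i, ℙ (A c i) ≤ ENNReal.ofReal (2 / β * Real.exp (-f c)) := by
    intro c hc i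
    have := (hident i).measure_mem_eq (hmeasR c)
    rw [hAeq]
    rw [this]
    exact htail c hc
  -- a.s. all |W i| ≥ g
  have hallabs : ∀ᵐ ω ∂(ℙ : Measure Ω), ∀ i, g ≤ |W i ω| := by
    rw [MeasureTheory.ae_all_iff]
    intro i
    have h0 : ℙ (W ⟨0, hk⟩ ⁻¹' {x : ℝ | g ≤ |x|}ᶜ) = 0 := by
      have h := habs
      rw [MeasureTheory.ae_iff] at h
      exact h
    have heq := (hident i).measure_mem_eq (hmeasR g).compl
    rw [MeasureTheory.ae_iff]
    exact heq.trans h0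
  -- pointwise covering
  have hcover : ∀ ω : Ω, (∀ i, g ≤ |W i ω|) → r < ∑ i, |W i ω| →
      ∃ j : Fin k → Fin (N + 2), (1 - δ) * r ≤ (∑ i, b (j i)) ∧ ∀ i, b (j i) ≤ |W i ω| := by
    intro ω hωg hωr
    have hb0 : ∀ h, b ⟨0, h⟩ = g := by
      intro h
      show min (g * (1 + δ) ^ ((0 : ℕ))) r = g
      rw [pow_zero, mul_one]
      exact min_eq_left hgr.le
    by_cases hbig : ∃ i₀, r ≤ |W i₀ ω|
    · obtain ⟨i₀, hi₀⟩ := hbig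
      classical
      refine ⟨Function.update (fun _ => (⟨0, by omega⟩ : Fin (N + 2))) i₀ ⟨N + 1, by omega⟩,
        ?_, ?_⟩
      · have h1 : b (Function.update (fun _ => (⟨0, by omega⟩ : Fin (N + 2))) i₀
              (⟨N + 1, by omega⟩ : Fin (N + 2)) i₀) ≤
            ∑ i, b (Function.update (fun _ => (⟨0, by omega⟩ : Fin (N + 2))) i₀
              (⟨N + 1, by omega⟩ : Fin (N + 2)) i) :=
          Finset.single_le_sum (f := fun i => b (Function.update
              (fun _ => (⟨0, by omega⟩ : Fin (N + 2))) i₀ (⟨N + 1, by omega⟩ : Fin (N + 2)) i))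
            (fun i _ => (hg.trans_le (hbg _)).le) (Finset.mem_univ i₀)
        rw [Function.update_self, hblast] at h1
        nlinarith [mul_pos hδ0 hr0]
      · intro i
        by_cases hi : i = i₀
        · subst hi
          rw [Function.update_self, hblast]
          exact hi₀
        · rw [Function.update_of_ne hi, hb0]
          exact hωg i
    · push_neg at hbig
      set n : Fin k → ℕ := fun i => ⌊(Real.log |W i ω| - Real.log g) / Real.log (1 + δ)⌋₊ with hndef
      have ht : ∀ i, 0 < |W i ω| := fun i => hg.trans_le (hωg i)
      have hx0 : ∀ i, 0 ≤ (Real.log |W i ω| - Real.log g) / Real.log (1 + δ) := by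
        intro i
        have := Real.log_le_log hg (hωg i)
        exact div_nonneg (by linarith) hlog1δ.le
      have hnN : ∀ i, n i ≤ N := by
        intro i
        apply Nat.floor_le_floor
        refine (div_le_div_iff_of_pos_right hlog1δ).2 ?_
        have := Real.log_le_log (ht i) (hbig i).le
        linarith
      have hlow : ∀ i, g * (1 + δ) ^ (n i) ≤ |W i ω| := by
        intro i
        have h1 : (n i : ℝ) ≤ (Real.log |W i ω| - Real.log g) / Real.log (1 + δ) :=
          Nat.floor_le (hx0 i)
        have h2 : Real.log (g * (1 + δ) ^ (n i)) ≤ Real.log |W i ω| := by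
          rw [hlogpow]
          have h3 := (le_div_iff₀ hlog1δ).1 h1
          linarith
        exact (Real.log_le_log_iff (by positivity) (ht i)).1 h2
      have hup : ∀ i, |W i ω| < (1 + δ) * (g * (1 + δ) ^ (n i)) := by
        intro i
        have h1 : (Real.log |W i ω| - Real.log g) / Real.log (1 + δ) < (n i : ℝ) + 1 :=
          Nat.lt_floor_add_one _
        have h2 : Real.log |W i ω| < Real.log (g * (1 + δ) ^ (n i + 1)) := by
          rw [hlogpow]
          have h3 := (div_lt_iff₀ hlog1δ).1 h1
          push_cast
          linarith
        have h3 := (Real.log_lt_log_iff (ht i) (by positivity)).1 h2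
        calc |W i ω| < g * (1 + δ) ^ (n i + 1) := h3
          _ = (1 + δ) * (g * (1 + δ) ^ (n i)) := by ring
      have hmem : ∀ i, n i < N + 2 := fun i => by have := hnN i; omega
      have hbeq : ∀ i, b ⟨n i, hmem i⟩ = g * (1 + δ) ^ (n i) :=
        fun i => min_eq_left ((hlow i).trans (hbig i).le)
      refine ⟨fun i => ⟨n i, hmem i⟩, ?_, ?_⟩
      · have hsum : ∑ i, |W i ω| ≤ (1 + δ) * ∑ i, (g * (1 + δ) ^ (n i)) := by
          rw [Finset.mul_sum]
          exact Finset.sum_le_sum (fun i _ => (hup i).le)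
        have key : r < (1 + δ) * ∑ i, (g * (1 + δ) ^ (n i)) := lt_of_lt_of_le hωr hsum
        simp only [hbeq]
        nlinarith [key, mul_nonneg (mul_nonneg hδ0.le hδ0.le) hr0.le]
      · intro i
        rw [hbeq i]
        exact hlow i
  classical
  -- abbreviations
  set Z : Set ℝ := {s : ℝ | ∃ x : Fin k → ℝ, (∀ i, x i ∈ Set.Icc g r) ∧
      (∑ i, x i) = (1 - δ) * r ∧ s = ∑ i, f (x i)} with hZdef
  have hZbdd : BddBelow Z := by
    refine ⟨(k : ℝ) * f g, ?_⟩
    rintro s ⟨x, hx, -, rfl⟩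
    calc (k : ℝ) * f g = ∑ _i : Fin k, f g := by
          rw [Finset.sum_const, Finset.card_univ, Fintype.card_fin, nsmul_eq_mul]
      _ ≤ ∑ i, f (x i) := Finset.sum_le_sum (fun i _ =>
          hf Set.self_mem_Ici (Set.mem_Ici.2 (hx i).1) (hx i).1)
  have hβ0 : 0 < 2 / β := by rw [hβ]; positivity
  -- the finite family of intersections
  set S : Finset (Fin k → Fin (N + 2)) :=
    Finset.univ.filter (fun j => (1 - δ) * r ≤ ∑ i, b (j i)) with hSdef
  have hstep1 : ℙ {ω | r < ∑ i, |W i ω|} ≤ ℙ (⋃ j ∈ S, ⋂ i, A (b (j i)) i) := by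
    apply measure_mono_ae
    filter_upwards [hallabs] with ω hωg hωr
    obtain ⟨j, hjsum, hjle⟩ := hcover ω hωg hωr
    have hjS : j ∈ S := Finset.mem_filter.2 ⟨Finset.mem_univ _, hjsum⟩
    exact Set.mem_biUnion hjS (Set.mem_iInter.2 hjle)
  have hterm : ∀ j ∈ S, ℙ (⋂ i, A (b (j i)) i) ≤
      ENNReal.ofReal ((2 / β) ^ k * Real.exp (-sInf Z)) := by
    intro j hj
    have hprod : ℙ (⋂ i, A (b (j i)) i) = ∏ i, ℙ (A (b (j i)) i) :=
      hindep.meas_iInter (fun i => ⟨{x : ℝ | b (j i) ≤ |x|}, hmeasR _, rfl⟩)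
    rw [hprod]
    have h1 : ∏ i, ℙ (A (b (j i)) i) ≤
        ∏ i, ENNReal.ofReal (2 / β * Real.exp (-f (b (j i)))) :=
      Finset.prod_le_prod' (fun i _ => hAprob _ (hbg _) i)
    refine h1.trans ?_
    rw [← ENNReal.ofReal_prod_of_nonneg (fun i _ => by positivity)]
    apply ENNReal.ofReal_le_ofReal
    have hprodeq : ∏ i : Fin k, (2 / β * Real.exp (-f (b (j i)))) =
        (2 / β) ^ k * Real.exp (-∑ i, f (b (j i))) := by
      rw [Finset.prod_mul_distrib, Finset.prod_const, Finset.card_univ, Fintype.card_fin,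
        ← Real.exp_sum]
      congr 1
      rw [← Finset.sum_neg_distrib]
    rw [hprodeq]
    have hsInf : sInf Z ≤ ∑ i, f (b (j i)) := by
      have hjsum : (1 - δ) * r ≤ ∑ i, b (j i) := (Finset.mem_filter.1 hj).2
      obtain ⟨x, hx, hxsum⟩ :=
        exists_scaled_down g ((1 - δ) * r) (fun i => b (j i)) (fun i => hbg _) hδr.le hjsum
      have hxZ : (∑ i, f (x i)) ∈ Z :=
        ⟨x, fun i => ⟨(hx i).1, (hx i).2.trans (hbr _)⟩, hxsum, rfl⟩
      refine (csInf_le hZbdd hxZ).trans (Finset.sum_le_sum (fun i _ => ?_))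
      exact hf (Set.mem_Ici.2 (hx i).1) (Set.mem_Ici.2 (hbg _)) (hx i).2
    have := Real.exp_le_exp.2 (neg_le_neg hsInf)
    nlinarith [pow_pos hβ0 k, Real.exp_pos (-∑ i, f (b (j i))), Real.exp_pos (-sInf Z)]
  calc ℙ {ω | r < ∑ i, |W i ω|} ≤ ℙ (⋃ j ∈ S, ⋂ i, A (b (j i)) i) := hstep1
    _ ≤ ∑ j ∈ S, ℙ (⋂ i, A (b (j i)) i) := measure_biUnion_finset_le _ _
    _ ≤ ∑ _j ∈ S, ENNReal.ofReal ((2 / β) ^ k * Real.exp (-sInf Z)) :=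
        Finset.sum_le_sum hterm
    _ = (S.card : ENNReal) * ENNReal.ofReal ((2 / β) ^ k * Real.exp (-sInf Z)) := by
        rw [Finset.sum_const, nsmul_eq_mul]
    _ ≤ (((N + 2) ^ k : ℕ) : ENNReal) * ENNReal.ofReal ((2 / β) ^ k * Real.exp (-sInf Z)) := by
        apply mul_le_mul_left
        apply Nat.cast_le.2
        calc S.card ≤ Finset.univ.card := Finset.card_filter_le _ _
          _ = (N + 2) ^ k := by rw [Finset.card_univ, Fintype.card_fun]; simp
    _ = ENNReal.ofReal ((((N + 2) ^ k : ℕ) : ℝ) * ((2 / β) ^ k * Real.exp (-sInf Z))) := by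
        rw [← ENNReal.ofReal_natCast ((N + 2) ^ k), ← ENNReal.ofReal_mul (by positivity)]
    _ ≤ ENNReal.ofReal ((2 / β) ^ k * (2 + L) ^ k * Real.exp (-sInf Z)) := by
        apply ENNReal.ofReal_le_ofReal
        have hNk : (((N + 2) ^ k : ℕ) : ℝ) ≤ (2 + L) ^ k := by
          push_cast
          exact pow_le_pow_left₀ (by positivity) (by linarith) k
        have h1 : (0:ℝ) ≤ (2 / β) ^ k * Real.exp (-sInf Z) := by positivity
        nlinarith [mul_le_mul_of_nonneg_right hNk h1]
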